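/- Let all variables be discrete with joint distributions P_o (observational) and P_s (interventional). Assume: (1) extended stability: p(u_i, l_i | ū_{i-1}, l̄_{i-1}, ā_{i-1}; σ) is the same for σ = o and σ = s wherever both are defined; (2) s is a control strategy: A_i ⫫ Ū_i | (L̄_i, Ā_{i-1}) under P_s; (3) sequential irrelevance in the interventional regime: p(l_i | ū_{i-1}, l̄_{i-1}, ā_{i-1}; s) = p(l_i | l̄_{i-1}, ā_{i-1}; s) wherever defined, for i = 1,...,n+1. Then simple stability holds: for every i and every l_i, there is a function w(l̄_{i-1}, ā_{i-1}) such that p(l_i | l̄_{i-1}, ā_{i-1}; σ) = w(l̄_{i-1}, ā_{i-1}) for both σ = o and σ = s, whenever p(l̄_{i-1}, ā_{i-1}; σ) > 0. No positivity assumption is required. -/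

import Mathlib

open MeasureTheory

/-- The partial-history event: the first `p` of the `L`'s, the first `q` of the `U`'s and the
first `r` of the `A`'s take the prescribed values `l`, `u`, `a` (0-based indexing; the time
order is `L i, U i, A i`). -/
def HistEvent {Ω : Type*} (L U A : ℕ → Ω → ℕ) (l u a : ℕ → ℕ) (p q r : ℕ) : Set Ω :=
  {ω | (∀ i < p, L i ω = l i) ∧ (∀ i < q, U i ω = u i) ∧ (∀ i < r, A i ω = a i)}

section Helpers
variable {Ω : Type*} [MeasurableSpace Ω] (L U A : ℕ → Ω → ℕ)

lemma measurableSet_histEvent (hL : ∀ i, Measurable (L i)) (hU : ∀ i, Measurable (U i))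
    (hA : ∀ i, Measurable (A i)) (l u a : ℕ → ℕ) (p q r : ℕ) :
    MeasurableSet (HistEvent L U A l u a p q r) := by
  have : HistEvent L U A l u a p q r =
      (⋂ i ∈ Finset.range p, L i ⁻¹' {l i}) ∩
        ((⋂ i ∈ Finset.range q, U i ⁻¹' {u i}) ∩ (⋂ i ∈ Finset.range r, A i ⁻¹' {a i})) := by
    ext ω
    simp [HistEvent, Set.mem_iInter]
  rw [this]
  exact ((Finset.range p).measurableSet_biInter fun i _ => (hL i) (measurableSet_singleton _)).inter
    (((Finset.range q).measurableSet_biInter fun i _ => (hU i) (measurableSet_singleton _)).inter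
      ((Finset.range r).measurableSet_biInter fun i _ => (hA i) (measurableSet_singleton _)))

lemma histEvent_congr_u {u u' : ℕ → ℕ} {q : ℕ} (h : ∀ i < q, u i = u' i) (l a : ℕ → ℕ) (p r : ℕ) :
    HistEvent L U A l u a p q r = HistEvent L U A l u' a p q r := by
  ext ω
  simp only [HistEvent, Set.mem_setOf_eq]
  constructor <;> rintro ⟨h1, h2, h3⟩ <;> refine ⟨h1, fun i hi => ?_, h3⟩
  · rw [h2 i hi, h i hi]
  · rw [h2 i hi, h i hi]

lemma histEvent_subset {p q r p' q' r' : ℕ} (hp : p ≤ p') (hq : q ≤ q') (hr : r ≤ r')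
    (l u a : ℕ → ℕ) :
    HistEvent L U A l u a p' q' r' ⊆ HistEvent L U A l u a p q r := by
  rintro ω ⟨h1, h2, h3⟩
  exact ⟨fun i hi => h1 i (hi.trans_le hp), fun i hi => h2 i (hi.trans_le hq),
    fun i hi => h3 i (hi.trans_le hr)⟩

lemma histEvent_split (μ : Measure Ω) (hL : ∀ i, Measurable (L i)) (hU : ∀ i, Measurable (U i))
    (hA : ∀ i, Measurable (A i)) (l u a : ℕ → ℕ) (p q r : ℕ) :
    μ (HistEvent L U A l u a p 0 r) =
      ∑' f : Fin q → ℕ,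
        μ (HistEvent L U A l (fun i => if h : i < q then f ⟨i, h⟩ else 0) a p q r) := by
  rw [← measure_iUnion ?_ fun f => measurableSet_histEvent L U A hL hU hA _ _ _ _ _ _]
  · congr 1
    ext ω
    simp only [Set.mem_iUnion, HistEvent, Set.mem_setOf_eq]
    constructor
    · rintro ⟨h1, -, h3⟩
      exact ⟨fun i => U i.1 ω, h1, fun i hi => by simp [hi], h3⟩
    · rintro ⟨f, h1, h2, h3⟩
      exact ⟨h1, fun i hi => absurd hi (Nat.not_lt_zero i), h3⟩
  · intro f g hfg
    apply Set.disjoint_left.mpr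
    rintro ω ⟨-, h2, -⟩ ⟨-, h2', -⟩
    apply hfg
    funext i
    have e1 := h2 i.1 i.2
    have e2 := h2' i.1 i.2
    simp only [dif_pos i.2] at e1 e2
    rw [← e1, ← e2]

lemma histEvent_step (μ : Measure Ω) (hL : ∀ i, Measurable (L i)) (hU : ∀ i, Measurable (U i))
    (hA : ∀ i, Measurable (A i)) (l u a : ℕ → ℕ) (p q r : ℕ) :
    μ (HistEvent L U A l u a p q r) =
      ∑' m : ℕ, μ (HistEvent L U A l (Function.update u q m) a p (q + 1) r) := by
  rw [← measure_iUnion ?_ fun m => measurableSet_histEvent L U A hL hU hA _ _ _ _ _ _]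
  · congr 1
    ext ω
    simp only [Set.mem_iUnion, HistEvent, Set.mem_setOf_eq]
    constructor
    · rintro ⟨h1, h2, h3⟩
      refine ⟨U q ω, h1, fun i hi => ?_, h3⟩
      rcases Nat.lt_succ_iff_lt_or_eq.mp hi with hi | rfl
      · rw [Function.update_apply, if_neg hi.ne, h2 i hi]
      · simp
    · rintro ⟨m, h1, h2, h3⟩
      refine ⟨h1, fun i hi => ?_, h3⟩
      rw [h2 i (hi.trans q.lt_succ_self), Function.update_apply, if_neg hi.ne]
  · intro m m' hmm
    apply Set.disjoint_left.mpr
    rintro ω ⟨-, h2, -⟩ ⟨-, h2', -⟩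
    apply hmm
    have e1 := h2 q q.lt_succ_self
    have e2 := h2' q q.lt_succ_self
    simp only [Function.update_self] at e1 e2
    rw [← e1, ← e2]

end Helpers

/-- Theorem 2 (discrete case): extended stability, `s` a control strategy, and sequential
irrelevance in the *interventional* regime `s` together imply simple stability—with no
positivity assumption required. -/
theorem discrete_sequential_irrelevance_implies_simple_stability
    {Ω : Type*} [MeasurableSpace Ω] (n : ℕ)
    (Po Ps : Measure Ω) [IsProbabilityMeasure Po] [IsProbabilityMeasure Ps]
    (L U A : ℕ → Ω → ℕ)
    (hL : ∀ i, Measurable (L i)) (hU : ∀ i, Measurable (U i)) (hA : ∀ i, Measurable (A i))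
    -- (1) extended stability: p(u_i, l_i | ū_{i-1}, l̄_{i-1}, ā_{i-1} ; σ) is the same for
    -- σ = o and σ = s wherever both are defined
    (hES : ∀ i ≤ n, ∀ l u a : ℕ → ℕ,
      0 < Po (HistEvent L U A l u a i i i) → 0 < Ps (HistEvent L U A l u a i i i) →
        (Po (HistEvent L U A l u a (i + 1) (i + 1) i)).toReal /
            (Po (HistEvent L U A l u a i i i)).toReal =
          (Ps (HistEvent L U A l u a (i + 1) (i + 1) i)).toReal /
            (Ps (HistEvent L U A l u a i i i)).toReal)
    -- (2) s is a control strategy: A_i ⫫ Ū_i | (L̄_i, Ā_{i-1}) under P_s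
    (hCS : ∀ i ≤ n, ∀ l u a : ℕ → ℕ,
      0 < Ps (HistEvent L U A l u a (i + 1) (i + 1) i) →
      0 < Ps (HistEvent L U A l u a (i + 1) 0 i) →
        (Ps (HistEvent L U A l u a (i + 1) (i + 1) (i + 1))).toReal /
            (Ps (HistEvent L U A l u a (i + 1) (i + 1) i)).toReal =
          (Ps (HistEvent L U A l u a (i + 1) 0 (i + 1))).toReal /
            (Ps (HistEvent L U A l u a (i + 1) 0 i)).toReal)
    -- (3) sequential irrelevance in the interventional regime:
    -- p(l_i | ū_{i-1}, l̄_{i-1}, ā_{i-1} ; s) = p(l_i | l̄_{i-1}, ā_{i-1} ; s) wherever defined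
    (hSI : ∀ i ≤ n, ∀ l u a : ℕ → ℕ,
      0 < Ps (HistEvent L U A l u a i i i) → 0 < Ps (HistEvent L U A l u a i 0 i) →
        (Ps (HistEvent L U A l u a (i + 1) i i)).toReal /
            (Ps (HistEvent L U A l u a i i i)).toReal =
          (Ps (HistEvent L U A l u a (i + 1) 0 i)).toReal /
            (Ps (HistEvent L U A l u a i 0 i)).toReal) :
    -- simple stability: for each i there is a function w(l̄_{i-1}, ā_{i-1}) (for each value
    -- l_i, encoded by letting w depend on the whole configuration l) serving as the
    -- conditional pmf of L_i in both regimes, wherever defined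
    ∀ i ≤ n, ∃ w : (ℕ → ℕ) → (ℕ → ℕ) → ℝ, ∀ l a : ℕ → ℕ,
      (0 < Po (HistEvent L U A l (fun _ => 0) a i 0 i) →
        (Po (HistEvent L U A l (fun _ => 0) a (i + 1) 0 i)).toReal /
            (Po (HistEvent L U A l (fun _ => 0) a i 0 i)).toReal = w l a) ∧
      (0 < Ps (HistEvent L U A l (fun _ => 0) a i 0 i) →
        (Ps (HistEvent L U A l (fun _ => 0) a (i + 1) 0 i)).toReal /
            (Ps (HistEvent L U A l (fun _ => 0) a i 0 i)).toReal = w l a) := by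
  classical
  have posR : ∀ (μ : Measure Ω) [IsFiniteMeasure μ] (S : Set Ω), 0 < μ S → 0 < (μ S).toReal :=
    fun μ _ S h => ENNReal.toReal_pos h.ne' (measure_ne_top μ S)
  have posM : ∀ (μ : Measure Ω) (S : Set Ω), 0 < (μ S).toReal → 0 < μ S := by
    intro μ S h
    rcases eq_or_lt_of_le (zero_le : (0 : ENNReal) ≤ μ S) with he | hl
    · rw [← he] at h; simp at h
    · exact hl
  -- the key auxiliary positivity fact
  have aux : ∀ k, k ≤ n → ∀ l u a : ℕ → ℕ, 0 < Ps (HistEvent L U A l u a k 0 k) →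
      0 < Po (HistEvent L U A l u a k k k) → 0 < Ps (HistEvent L U A l u a k k k) := by
    intro k
    induction k with
    | zero => intro _ l u a hs _; exact hs
    | succ k ih =>
      intro hk1 l u a hs ho
      have hkn : k ≤ n := Nat.le_of_succ_le hk1
      have hs' : 0 < Ps (HistEvent L U A l u a k 0 k) :=
        lt_of_lt_of_le hs (measure_mono
          (histEvent_subset L U A (Nat.le_succ k) le_rfl (Nat.le_succ k) l u a))
      have ho' : 0 < Po (HistEvent L U A l u a k k k) :=
        lt_of_lt_of_le ho (measure_mono
          (histEvent_subset L U A (Nat.le_succ k) (Nat.le_succ k) (Nat.le_succ k) l u a))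
      have hsk : 0 < Ps (HistEvent L U A l u a k k k) := ih hkn l u a hs' ho'
      have hE := hES k hkn l u a ho' hsk
      have hnum_o : 0 < (Po (HistEvent L U A l u a (k + 1) (k + 1) k)).toReal :=
        posR _ _ (lt_of_lt_of_le ho (measure_mono
          (histEvent_subset L U A le_rfl le_rfl (Nat.le_succ k) l u a)))
      have hden_s : 0 < (Ps (HistEvent L U A l u a k k k)).toReal := posR _ _ hsk
      have hEpos : 0 < (Ps (HistEvent L U A l u a (k + 1) (k + 1) k)).toReal /
          (Ps (HistEvent L U A l u a k k k)).toReal :=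
        hE ▸ div_pos hnum_o (posR _ _ ho')
      have hsA : 0 < Ps (HistEvent L U A l u a (k + 1) (k + 1) k) := by
        apply posM
        have := mul_pos hEpos hden_s
        rwa [div_mul_cancel₀ _ hden_s.ne'] at this
      have hsB0 : 0 < Ps (HistEvent L U A l u a (k + 1) 0 k) :=
        lt_of_lt_of_le hs (measure_mono
          (histEvent_subset L U A le_rfl le_rfl (Nat.le_succ k) l u a))
      have hC := hCS k hkn l u a hsA hsB0
      have hCpos : 0 < (Ps (HistEvent L U A l u a (k + 1) (k + 1) (k + 1))).toReal /
          (Ps (HistEvent L U A l u a (k + 1) (k + 1) k)).toReal :=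
        hC ▸ div_pos (posR _ _ hs) (posR _ _ hsB0)
      apply posM
      have hden := posR _ _ hsA
      have := mul_pos hCpos hden
      rwa [div_mul_cancel₀ _ hden.ne'] at this
  intro i hin
  -- the key ratio identity
  have key : ∀ l a : ℕ → ℕ, 0 < Po (HistEvent L U A l (fun _ => 0) a i 0 i) →
      0 < Ps (HistEvent L U A l (fun _ => 0) a i 0 i) →
      (Po (HistEvent L U A l (fun _ => 0) a (i + 1) 0 i)).toReal /
          (Po (HistEvent L U A l (fun _ => 0) a i 0 i)).toReal =
        (Ps (HistEvent L U A l (fun _ => 0) a (i + 1) 0 i)).toReal /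
          (Ps (HistEvent L U A l (fun _ => 0) a i 0 i)).toReal := by
    intro l a hpo hps
    set ρ := (Ps (HistEvent L U A l (fun _ => 0) a (i + 1) 0 i)).toReal /
      (Ps (HistEvent L U A l (fun _ => 0) a i 0 i)).toReal with hρ
    have hq0 : ∀ (u' : ℕ → ℕ) (p r : ℕ), HistEvent L U A l u' a p 0 r =
        HistEvent L U A l (fun _ => 0) a p 0 r :=
      fun u' p r => histEvent_congr_u L U A (fun j hj => absurd hj (Nat.not_lt_zero j)) l a p r
    have perf : ∀ f : Fin i → ℕ,
        (Po (HistEvent L U A l (fun j => if h : j < i then f ⟨j, h⟩ else 0) a (i + 1) i i)).toReal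
          = ρ * (Po (HistEvent L U A l (fun j => if h : j < i then f ⟨j, h⟩ else 0)
              a i i i)).toReal := by
      intro f
      set u : ℕ → ℕ := fun j => if h : j < i then f ⟨j, h⟩ else 0 with hu
      by_cases h0 : Po (HistEvent L U A l u a i i i) = 0
      · have hz : Po (HistEvent L U A l u a (i + 1) i i) = 0 :=
          measure_mono_null (histEvent_subset L U A (Nat.le_succ i) le_rfl le_rfl l u a) h0
        simp [hz, h0]
      · have hpo_f : 0 < Po (HistEvent L U A l u a i i i) := pos_iff_ne_zero.mpr h0
        have hps_f0 : 0 < Ps (HistEvent L U A l u a i 0 i) := by rw [hq0]; exact hps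
        have hps_f : 0 < Ps (HistEvent L U A l u a i i i) := aux i hin l u a hps_f0 hpo_f
        have hcu : ∀ m : ℕ, HistEvent L U A l (Function.update u i m) a i i i =
            HistEvent L U A l u a i i i :=
          fun m => histEvent_congr_u L U A
            (fun j hj => Function.update_of_ne hj.ne m u) l a i i
        have hES' : ∀ m : ℕ,
            (Po (HistEvent L U A l (Function.update u i m) a (i + 1) (i + 1) i)).toReal /
                (Po (HistEvent L U A l u a i i i)).toReal =
              (Ps (HistEvent L U A l (Function.update u i m) a (i + 1) (i + 1) i)).toReal /
                (Ps (HistEvent L U A l u a i i i)).toReal := by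
          intro m
          have h := hES i hin l (Function.update u i m) a
            (by rwa [hcu m]) (by rwa [hcu m])
          rwa [hcu m] at h
        have ho_ratio : (Po (HistEvent L U A l u a (i + 1) i i)).toReal /
              (Po (HistEvent L U A l u a i i i)).toReal =
            (Ps (HistEvent L U A l u a (i + 1) i i)).toReal /
              (Ps (HistEvent L U A l u a i i i)).toReal := by
          rw [histEvent_step L U A Po hL hU hA l u a (i + 1) i i,
            histEvent_step L U A Ps hL hU hA l u a (i + 1) i i,
            ENNReal.tsum_toReal_eq (fun m => measure_ne_top _ _),
            ENNReal.tsum_toReal_eq (fun m => measure_ne_top _ _),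
            ← tsum_div_const, ← tsum_div_const]
          exact tsum_congr hES'
        have hSI' := hSI i hin l u a hps_f hps_f0
        simp only [hq0] at hSI'
        have hfin : (Po (HistEvent L U A l u a (i + 1) i i)).toReal /
            (Po (HistEvent L U A l u a i i i)).toReal = ρ := ho_ratio.trans hSI'
        have hden : (0:ℝ) < (Po (HistEvent L U A l u a i i i)).toReal := posR _ _ hpo_f
        rw [div_eq_iff hden.ne'] at hfin
        rw [hfin, mul_comm]
    have hsplit1 : (Po (HistEvent L U A l (fun _ => 0) a (i + 1) 0 i)).toReal =
        ∑' f : Fin i → ℕ, (Po (HistEvent L U A l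
          (fun j => if h : j < i then f ⟨j, h⟩ else 0) a (i + 1) i i)).toReal := by
      rw [histEvent_split L U A Po hL hU hA l (fun _ => 0) a (i + 1) i i,
        ENNReal.tsum_toReal_eq (fun f => measure_ne_top _ _)]
    have hsplit0 : (Po (HistEvent L U A l (fun _ => 0) a i 0 i)).toReal =
        ∑' f : Fin i → ℕ, (Po (HistEvent L U A l
          (fun j => if h : j < i then f ⟨j, h⟩ else 0) a i i i)).toReal := by
      rw [histEvent_split L U A Po hL hU hA l (fun _ => 0) a i i i,
        ENNReal.tsum_toReal_eq (fun f => measure_ne_top _ _)]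
    have htot : (Po (HistEvent L U A l (fun _ => 0) a (i + 1) 0 i)).toReal =
        ρ * (Po (HistEvent L U A l (fun _ => 0) a i 0 i)).toReal := by
      rw [hsplit1, hsplit0, ← tsum_mul_left]
      exact tsum_congr perf
    rw [htot, mul_div_assoc, div_self (posR _ _ hpo).ne', mul_one]
  refine ⟨fun l a => if 0 < Ps (HistEvent L U A l (fun _ => 0) a i 0 i) then
      (Ps (HistEvent L U A l (fun _ => 0) a (i + 1) 0 i)).toReal /
        (Ps (HistEvent L U A l (fun _ => 0) a i 0 i)).toReal
    else
      (Po (HistEvent L U A l (fun _ => 0) a (i + 1) 0 i)).toReal /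
        (Po (HistEvent L U A l (fun _ => 0) a i 0 i)).toReal, fun l a => ⟨?_, ?_⟩⟩
  · intro hpo
    by_cases hps : 0 < Ps (HistEvent L U A l (fun _ => 0) a i 0 i)
    · simp only [if_pos hps]; exact key l a hpo hps
    · simp only [if_neg hps]
  · intro hps
    simp only [if_pos hps]
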